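/- For every integer n ≥ 0, (1/(2π)^{2n+2}) ∫₀^∞ x^{2n} · log(1 + e^{−2x} − 2e^{−x}) dx = (−1)^{n+1} B_{2n+2} / ((2n+2)(2n+1)). -/

import Mathlib

open MeasureTheory Real Finset Nat

lemma aux_int (m : ℕ) {c : ℝ} (hc : 0 < c) :
    IntegrableOn (fun x : ℝ => x ^ m * Real.exp (-(c * x))) (Set.Ioi 0) := by
  have h := integrableOn_rpow_mul_exp_neg_mul_rpow (s := (m : ℝ)) (p := 1)
    (neg_one_lt_zero.trans_le (Nat.cast_nonneg m)) one_pos hc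
  refine h.congr_fun (fun x hx => ?_) measurableSet_Ioi
  dsimp only
  rw [Real.rpow_one, Real.rpow_natCast, neg_mul]

lemma aux_val (m : ℕ) {c : ℝ} (hc : 0 < c) :
    ∫ x in Set.Ioi (0:ℝ), x ^ m * Real.exp (-(c * x)) = m ! / c ^ (m+1) := by
  have h := Real.integral_rpow_mul_exp_neg_mul_Ioi (a := (m:ℝ)+1) (by positivity) hc
  simp only [add_sub_cancel_right, Real.rpow_natCast] at h
  rw [h, show ((m:ℝ)+1) = ((m+1:ℕ):ℝ) by push_cast; ring, Real.rpow_natCast,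
    Nat.cast_add, Nat.cast_one, Real.Gamma_nat_eq_factorial, div_pow, one_pow,
    div_mul_eq_mul_div, one_mul]

theorem stmt4 (n : ℕ) :
    (1 / (2*π) ^ (2*n+2)) *
        ∫ x in Set.Ioi (0:ℝ),
          x ^ (2*n) * Real.log (1 + Real.exp (-2*x) - 2*Real.exp (-x))
      = (-1 : ℝ) ^ (n+1) * ((bernoulli (2*n+2) : ℚ) : ℝ) / ((2*(n:ℝ)+2) * (2*(n:ℝ)+1)) := by
  set F : ℕ → ℝ → ℝ :=
    fun k x => (-2/((k:ℝ)+1)) * (x^(2*n) * Real.exp (-(((k:ℝ)+1) * x))) with hF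
  have hkpos : ∀ k : ℕ, (0:ℝ) < (k:ℝ)+1 := fun k => by positivity
  -- pointwise series expansion
  have hlog : ∀ x ∈ Set.Ioi (0:ℝ),
      x ^ (2*n) * Real.log (1 + Real.exp (-2*x) - 2*Real.exp (-x)) = ∑' k, F k x := by
    intro x hx
    rw [Set.mem_Ioi] at hx
    have habs : |Real.exp (-x)| < 1 := by
      rw [abs_of_pos (Real.exp_pos _)]
      exact Real.exp_lt_one_iff.2 (by linarith)
    have hs := (Real.hasSum_pow_div_log_of_abs_lt_one habs).mul_left (-2 * x^(2*n))
    have hs2 : HasSum (fun k => F k x)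
        (-2 * x^(2*n) * -Real.log (1 - Real.exp (-x))) := by
      have heq : (fun k : ℕ => F k x)
          = fun k : ℕ => -2 * x^(2*n) * (Real.exp (-x) ^ (k+1) / ((k:ℝ)+1)) := by
        funext k
        rw [hF]
        dsimp only
        rw [show -(((k:ℝ)+1)*x) = ((k+1:ℕ):ℝ)*(-x) by push_cast; ring, Real.exp_nat_mul]
        ring
      rw [heq]
      exact hs
    rw [hs2.tsum_eq]
    have hfac : 1 + Real.exp (-2*x) - 2*Real.exp (-x) = (1 - Real.exp (-x))^2 := by
      rw [show (-2*x) = (-x) + (-x) by ring, Real.exp_add]; ring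
    rw [hfac, show ((1 - Real.exp (-x))^2) = (1-Real.exp (-x))^(2:ℕ) from rfl, Real.log_pow]
    push_cast; ring
  rw [setIntegral_congr_fun measurableSet_Ioi hlog]
  -- integrability
  have hInt : ∀ k : ℕ, Integrable (F k) (volume.restrict (Set.Ioi 0)) := fun k =>
    ((aux_int (2*n) (hkpos k)).const_mul _)
  -- value of each integral
  have hval : ∀ k : ℕ, ∫ x in Set.Ioi (0:ℝ), F k x
      = -2 * (2*n)! / ((k:ℝ)+1)^(2*n+2) := by
    intro k
    rw [hF]
    rw [integral_const_mul, aux_val (2*n) (hkpos k)]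
    have hk := (hkpos k).ne'
    field_simp
    ring
  -- norm integrals
  have hnorm : ∀ k : ℕ, (∫ x in Set.Ioi (0:ℝ), ‖F k x‖)
      = 2 * (2*n)! / ((k:ℝ)+1)^(2*n+2) := by
    intro k
    have heq : ∀ x ∈ Set.Ioi (0:ℝ), ‖F k x‖
        = (2/((k:ℝ)+1)) * (x^(2*n) * Real.exp (-(((k:ℝ)+1) * x))) := by
      intro x hx
      rw [Set.mem_Ioi] at hx
      rw [hF]
      dsimp only
      rw [norm_mul, norm_mul, Real.norm_eq_abs, Real.norm_eq_abs, Real.norm_eq_abs,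
        abs_of_nonneg (by positivity : (0:ℝ) ≤ x^(2*n)),
        abs_of_pos (Real.exp_pos _), abs_div, abs_neg, abs_two,
        abs_of_pos (hkpos k)]
    rw [setIntegral_congr_fun measurableSet_Ioi heq,
      integral_const_mul, aux_val (2*n) (hkpos k)]
    have hk := (hkpos k).ne'
    field_simp
    ring
  -- summability of a zeta-type series
  have hzsum : Summable (fun k : ℕ => (1:ℝ)/((k:ℝ)+1)^(2*n+2)) := by
    have h0 : Summable (fun m : ℕ => (1:ℝ)/(m:ℝ)^(2*n+2)) :=
      Real.summable_one_div_nat_pow.2 (by omega)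
    have h1 := (summable_nat_add_iff (f := fun m : ℕ => (1:ℝ)/(m:ℝ)^(2*n+2)) 1).2 h0
    refine h1.congr fun k => ?_
    push_cast
    ring
  have hsummable : Summable (fun k : ℕ => ∫ x in Set.Ioi (0:ℝ), ‖F k x‖) := by
    simp_rw [hnorm]
    refine (hzsum.mul_left (2*((2*n)! : ℝ))).congr fun k => ?_
    rw [mul_one_div]
  rw [← MeasureTheory.integral_tsum_of_summable_integral_norm hInt hsummable]
  rw [tsum_congr hval]
  -- evaluate the sum using zeta values
  have hzeta := hasSum_zeta_nat (k := n+1) (Nat.succ_ne_zero n)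
  have hshift := (hasSum_nat_add_iff'
      (f := fun j : ℕ => 1/(j:ℝ)^(2*(n+1))) 1).2 hzeta
  have hS := hshift.mul_left (-2*((2*n)! : ℝ))
  have htsum : ∑' k : ℕ, (-2 * ((2*n)! : ℝ) / ((k:ℝ)+1)^(2*n+2))
      = -2*((2*n)! : ℝ) *
        ((-1 : ℝ) ^ (n + 1 + 1) * (2 : ℝ) ^ (2 * (n+1) - 1) * π ^ (2 * (n+1)) *
          bernoulli (2 * (n+1)) / (2 * (n+1))! -
          ∑ i ∈ range 1, 1/(i:ℝ)^(2*(n+1))) := by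
    refine HasSum.tsum_eq (hS.congr_fun fun k => ?_)
    rw [show 2*(n+1) = 2*n+2 by ring]
    push_cast
    rw [mul_one_div]
  rw [htsum]
  have hrange : ∑ i ∈ range 1, (1:ℝ)/(i:ℝ)^(2*(n+1)) = 0 := by
    rw [Finset.sum_range_one]
    norm_num
  rw [hrange, sub_zero]
  have hfact : (((2*(n+1))! : ℕ) : ℝ) = (2*(n:ℝ)+2) * ((2*(n:ℝ)+1) * ((2*n)! : ℕ)) := by
    rw [show 2*(n+1) = (2*n+1)+1 by ring, Nat.factorial_succ, Nat.factorial_succ]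
    push_cast
    ring
  rw [hfact]
  rw [show 2*(n+1)-1 = 2*n+1 by omega, show 2*(n+1) = 2*n+2 by ring]
  have hπ : π ≠ 0 := Real.pi_ne_zero
  have hf : ((2*n)! : ℝ) ≠ 0 := by positivity
  have h1 : (2*(n:ℝ)+2) ≠ 0 := by positivity
  have h2 : (2*(n:ℝ)+1) ≠ 0 := by positivity
  rw [mul_pow]
  field_simp
  ring
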